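/- Let n, r be positive integers, c, d integers, and B the r×r matrix with diagonal entries c and off-diagonal entries d. Let 𝒹₁ = gcd(c−d, n). A vector x = (x₁,...,x_r) ∈ ℤ^r satisfies B·x ≡ a·(1,...,1)^T (mod n) for some integer a if and only if for each j with 2 ≤ j ≤ r there exists an integer v_j such that x_j ≡ x₁ + v_j·(n/𝒹₁) (mod n). -/

import Mathlib

theorem stmt_1 (n r : ℕ) (hn : 0 < n) (hr : 0 < r) (c d : ℤ)
    (B : Matrix (Fin r) (Fin r) ℤ)
    (hB : ∀ i j, B i j = if i = j then c else d)
    (x : Fin r → ℤ) :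
    (∃ a : ℤ, ∀ i, B.mulVec x i ≡ a [ZMOD (n : ℤ)]) ↔
      (∀ j : Fin r, j ≠ ⟨0, hr⟩ →
        ∃ v : ℤ, x j ≡ x ⟨0, hr⟩ + v * ((n : ℤ) / (Int.gcd (c - d) n : ℤ)) [ZMOD (n : ℤ)]) := by
  set g : ℤ := (Int.gcd (c - d) n : ℤ) with hgdef
  have hgnat : Int.gcd (c - d) (n : ℤ) ≠ 0 := by
    intro h
    rw [Int.gcd_eq_zero_iff] at h
    have h2 := h.2
    simp at h2
    omega
  have hgpos : 0 < g := by
    rw [hgdef]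
    exact_mod_cast Nat.pos_of_ne_zero hgnat
  have hgd : g ∣ (c - d) := Int.gcd_dvd_left _ _
  have hgn : g ∣ (n : ℤ) := Int.gcd_dvd_right _ _
  set m : ℤ := (n : ℤ) / g with hmdef
  have hmn : g * m = (n : ℤ) := Int.mul_ediv_cancel' hgn
  have hcop : IsCoprime ((c - d) / g) m := by
    rw [Int.isCoprime_iff_gcd_eq_one]
    exact Int.gcd_div_gcd_div_gcd (Nat.pos_of_ne_zero hgnat)
  have key : ∀ t : ℤ, (n : ℤ) ∣ (c - d) * t ↔ m ∣ t := by
    intro t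
    constructor
    · intro h
      have h2 : g * m ∣ g * ((c - d) / g * t) := by
        rw [← mul_assoc, Int.mul_ediv_cancel' hgd, hmn]; exact h
      have h3 : m ∣ (c - d) / g * t := (mul_dvd_mul_iff_left hgpos.ne').mp h2
      exact hcop.symm.dvd_of_dvd_mul_left h3
    · rintro ⟨k, rfl⟩
      refine ⟨(c - d) / g * k, ?_⟩
      have hc' : g * ((c - d) / g) = c - d := Int.mul_ediv_cancel' hgd
      linear_combination (c - d) / g * k * hmn - m * k * hc'
  have hmv : ∀ i, B.mulVec x i = (c - d) * x i + d * ∑ j, x j := by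
    intro i
    simp only [Matrix.mulVec, dotProduct, hB]
    have h1 : ∀ j : Fin r, (if i = j then c else d) * x j
        = d * x j + (if i = j then (c - d) * x j else 0) := by
      intro j; split <;> ring
    simp only [h1, Finset.sum_add_distrib, Finset.sum_ite_eq, Finset.mem_univ, if_true,
      ← Finset.mul_sum]
    ring
  constructor
  · rintro ⟨a, ha⟩ j hj
    have h0 : B.mulVec x ⟨0, hr⟩ ≡ B.mulVec x j [ZMOD (n : ℤ)] :=
      (ha ⟨0, hr⟩).trans (ha j).symm
    rw [hmv, hmv] at h0
    have hd : (n : ℤ) ∣ (c - d) * (x j - x ⟨0, hr⟩) := by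
      have := h0.dvd
      have heq : (c - d) * x j + d * ∑ k, x k - ((c - d) * x ⟨0, hr⟩ + d * ∑ k, x k)
          = (c - d) * (x j - x ⟨0, hr⟩) := by ring
      rwa [heq] at this
    obtain ⟨v, hv⟩ := (key _).mp hd
    refine ⟨v, ?_⟩
    have : x j = x ⟨0, hr⟩ + v * m := by linarith [hv]
    rw [this]
  · intro h
    refine ⟨(c - d) * x ⟨0, hr⟩ + d * ∑ j, x j, fun i => ?_⟩
    rw [hmv]
    by_cases hi : i = ⟨0, hr⟩
    · rw [hi]
    · obtain ⟨v, hv⟩ := h i hi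
      have hd : (n : ℤ) ∣ (x ⟨0, hr⟩ + v * m - x i) := hv.dvd
      have hmn' : m ∣ (n : ℤ) := ⟨g, by rw [← hmn]; ring⟩
      have hmd : m ∣ x ⟨0, hr⟩ - x i := by
        have h1 : m ∣ (x ⟨0, hr⟩ + v * m - x i) := hmn'.trans hd
        have h2 : m ∣ v * m := dvd_mul_left m v
        have h3 : x ⟨0, hr⟩ - x i = (x ⟨0, hr⟩ + v * m - x i) - v * m := by ring
        rw [h3]; exact dvd_sub h1 h2
      have hnd : (n : ℤ) ∣ (c - d) * (x ⟨0, hr⟩ - x i) := (key _).mpr hmd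
      rw [Int.modEq_iff_dvd]
      have heq : (c - d) * x ⟨0, hr⟩ + d * ∑ j, x j - ((c - d) * x i + d * ∑ j, x j)
          = (c - d) * (x ⟨0, hr⟩ - x i) := by ring
      rw [heq]
      exact hnd
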